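/- Let Λ be a block and λ ∈ Λ. Enumerate the 2^{def(λ)} distinct elements of {μ ∈ Λ : μ ⊃ λ} as μ_1, μ_2, ..., μ_n = λ so that μ_i > μ_j implies i < j. Let M(0) := {0} and for i = 1, ..., n let M(i) be the subspace of P(λ) := K_Λ e_λ generated by M(i−1) and the vectors (c μ_i λ̄) for all oriented cup diagrams c μ_i. Then {0} = M(0) ⊂ M(1) ⊂ ... ⊂ M(n) = P(λ) is a filtration of P(λ) by K_Λ-submodules, and M(i)/M(i−1) ≅ V(μ_i)⟨deg(μ_i λ̄)⟩ as graded K_Λ-modules for each i = 1, ..., n. -/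

import Mathlib

/-!
Common combinatorial framework for Brundan–Stroppel, "Highest weight categories arising
from Khovanov's diagram algebra I: cellularity": weights, blocks, the Bruhat order,
cup/cap diagrams, oriented cup/cap/circle diagrams, degrees, and the abstract properties
of the diagrammatically defined multiplications.
-/

namespace BrundanStroppel

open scoped Classical

inductive Label : Type
  | nought : Label
  | cross : Label
  | down : Label
  | up : Label
  deriving DecidableEq

def Label.flip : Label → Label
  | Label.down => Label.up
  | Label.up => Label.down
  | l => l

/-- A weight: a labelling of the vertices (a set of consecutive integers) of the number
line by `∘`, `×`, `∨` (down) or `∧` (up), such that outside a finite set of vertices it is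
impossible to find two vertices labelled `∨ ∧` in that order from left to right. -/
structure Weight where
  label : ℤ → Option Label
  consecutive : ∀ a b c : ℤ, a ≤ b → b ≤ c →
    (label a).isSome → (label c).isSome → (label b).isSome
  tail : ∃ S : Finset ℤ, ∀ i j : ℤ, i < j → i ∉ S → j ∉ S →
    ¬(label i = some Label.down ∧ label j = some Label.up)

def Weight.support (w : Weight) : Set ℤ := {i : ℤ | (w.label i).isSome}

/-- `Sim v w` (`v ∼ w`): `w` is obtained from `v` by permuting the `∨`'s and the `∧`'s
(and doing nothing to the `∘`'s and `×`'s). -/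
def Sim (v w : Weight) : Prop :=
  (∀ i : ℤ, (v.label i).isSome ↔ (w.label i).isSome) ∧
  (∀ i : ℤ, v.label i = some Label.nought ↔ w.label i = some Label.nought) ∧
  (∀ i : ℤ, v.label i = some Label.cross ↔ w.label i = some Label.cross) ∧
  Nonempty ({i : ℤ | v.label i = some Label.down} ≃ {i : ℤ | w.label i = some Label.down}) ∧
  Nonempty ({i : ℤ | v.label i = some Label.up} ≃ {i : ℤ | w.label i = some Label.up})

/-- A block is a `∼`-equivalence class of weights. -/
def IsBlock (Λ : Set Weight) : Prop := ∃ w : Weight, Λ = {v : Weight | Sim w v}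

/-- One step up in the Bruhat order: a `∨ ∧` pair of labels (in this order from left to
right) is swapped to `∧ ∨`; getting bigger means `∨`'s move to the right. -/
def BruhatStep (v w : Weight) : Prop :=
  ∃ i j : ℤ, i < j ∧
    v.label i = some Label.down ∧ v.label j = some Label.up ∧
    w.label i = some Label.up ∧ w.label j = some Label.down ∧
    ∀ k : ℤ, k ≠ i → k ≠ j → w.label k = v.label k

/-- The Bruhat order on weights. -/
def BruhatLE : Weight → Weight → Prop := Relation.ReflTransGen BruhatStep

def BruhatLT (v w : Weight) : Prop := BruhatLE v w ∧ v ≠ w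

/-- The data of a cup diagram (or, mirrored in the number line, of a cap diagram):
finitely many cups (lower semicircles) and some rays (going down to infinity) attached to
vertices of the number line, with no crossings. -/
structure ArcDiagram where
  support : Set ℤ
  consecutive : ∀ a b c : ℤ, a ≤ b → b ≤ c → a ∈ support → c ∈ support → b ∈ support
  cups : Set (ℤ × ℤ)
  rays : Set ℤ
  cups_finite : cups.Finite
  cups_lt : ∀ p ∈ cups, p.1 < p.2
  cups_subset : ∀ p ∈ cups, p.1 ∈ support ∧ p.2 ∈ support
  rays_subset : rays ⊆ support
  cups_disjoint : ∀ p ∈ cups, ∀ q ∈ cups, p ≠ q →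
    p.1 ≠ q.1 ∧ p.1 ≠ q.2 ∧ p.2 ≠ q.1 ∧ p.2 ≠ q.2
  rays_cups_disjoint : ∀ p ∈ cups, ∀ r ∈ rays, r ≠ p.1 ∧ r ≠ p.2
  cups_noncrossing : ∀ p ∈ cups, ∀ q ∈ cups, p.1 < q.1 → q.1 < p.2 → q.2 < p.2
  rays_cups_noncrossing : ∀ p ∈ cups, ∀ r ∈ rays, ¬(p.1 < r ∧ r < p.2)

/-- The mirror image `c*` of a diagram in the number line, turning a cup diagram into a
cap diagram and vice versa; on the underlying combinatorial data it is the identity. -/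
def ArcDiagram.star (c : ArcDiagram) : ArcDiagram := c

/-- A free vertex of a diagram: not the endpoint of any cup or ray. -/
def ArcDiagram.Free (c : ArcDiagram) (i : ℤ) : Prop :=
  i ∈ c.support ∧ i ∉ c.rays ∧ ∀ p ∈ c.cups, i ≠ p.1 ∧ i ≠ p.2

/-- `c w` is an oriented cup diagram. -/
def OrientedCup (c : ArcDiagram) (w : Weight) : Prop :=
  c.support = w.support ∧
  (∀ i : ℤ, c.Free i → w.label i = some Label.nought ∨ w.label i = some Label.cross) ∧
  (∀ p ∈ c.cups,
    (w.label p.1 = some Label.down ∧ w.label p.2 = some Label.up) ∨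
    (w.label p.1 = some Label.up ∧ w.label p.2 = some Label.down)) ∧
  (∀ r ∈ c.rays, w.label r = some Label.down ∨ w.label r = some Label.up) ∧
  (∀ r ∈ c.rays, ∀ t ∈ c.rays, r < t →
    ¬(w.label r = some Label.down ∧ w.label t = some Label.up))

/-- `w b` is an oriented cap diagram iff `b* w` is an oriented cup diagram. -/
def OrientedCap (w : Weight) (b : ArcDiagram) : Prop := OrientedCup b.star w

/-- The degree of the oriented cup diagram `c w`: its number of clockwise cups
(a cup is clockwise if its leftmost vertex is labelled `∧`). -/
noncomputable def cupDeg (c : ArcDiagram) (w : Weight) : ℕ :=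
  {p ∈ c.cups | w.label p.1 = some Label.up}.ncard

/-- The degree of the oriented cap diagram `w b`: its number of clockwise caps. -/
noncomputable def capDeg (w : Weight) (b : ArcDiagram) : ℕ := cupDeg b.star w

/-- `IsUnderline w c` says that `c = w̲`, i.e. `c w` is an oriented cup diagram of
degree `0`, all of whose cups are anticlockwise. -/
def IsUnderline (w : Weight) (c : ArcDiagram) : Prop :=
  OrientedCup c w ∧ ∀ p ∈ c.cups, w.label p.1 = some Label.down

/-- `IsOverline w b` says that `b = w̄ = (w̲)*`. -/
def IsOverline (w : Weight) (b : ArcDiagram) : Prop := IsUnderline w b.star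

/-- `SubW v w` is the relation `v ⊂ w`: `v ∼ w` and `v̲ w` is an oriented cup diagram.
(Equivalently `w ⊃ v`: `w ∼ v` and `w v̄` is an oriented cap diagram.) -/
def SubW (v w : Weight) : Prop :=
  Sim v w ∧ ∃ c : ArcDiagram, IsUnderline v c ∧ OrientedCup c w

def arcAdj (a b : ArcDiagram) (i j : ℤ) : Prop :=
  (i, j) ∈ a.cups ∨ (j, i) ∈ a.cups ∨ (i, j) ∈ b.cups ∨ (j, i) ∈ b.cups

def reaches (a b : ArcDiagram) : ℤ → ℤ → Prop := Relation.ReflTransGen (arcAdj a b)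

/-- `C` is a circle of the circle diagram `a b` (cup diagram `a` glued under cap diagram
`b`): a connected component of the diagram in which every vertex lies both on a cup of `a`
and on a cap of `b`. -/
def IsCircle (a b : ArcDiagram) (C : Set ℤ) : Prop :=
  (∃ v ∈ C, ∀ j : ℤ, j ∈ C ↔ reaches a b v j) ∧
  ∀ i ∈ C, (∃ j : ℤ, (i, j) ∈ a.cups ∨ (j, i) ∈ a.cups) ∧
           (∃ j : ℤ, (i, j) ∈ b.cups ∨ (j, i) ∈ b.cups)

/-- The vertex `i` lies on a circle (rather than on a line) of the circle diagram `a b`: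
its connected component contains no ray. -/
def OnCircle (a b : ArcDiagram) (i : ℤ) : Prop :=
  ∀ j : ℤ, reaches a b i j → j ∉ a.rays ∧ j ∉ b.rays

/-- A Khovanov block of rank `n`: a block consisting of bounded weights having exactly
`n` labels `∨` and `n` labels `∧`. -/
def IsKhovanovBlock (Λ : Set Weight) (n : ℕ) : Prop :=
  IsBlock Λ ∧ ∀ w ∈ Λ, w.support.Finite ∧
    {i : ℤ | w.label i = some Label.down}.ncard = n ∧
    {i : ℤ | w.label i = some Label.up}.ncard = n

/-- An oriented circle diagram `a λ b` with weight `λ ∈ Λ`. -/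
structure OCD (Λ : Set Weight) where
  a : ArcDiagram
  wt : Weight
  b : ArcDiagram
  wt_mem : wt ∈ Λ
  oriented_a : OrientedCup a wt
  oriented_b : OrientedCap wt b

/-- A closed oriented circle diagram: one with no rays (hence no lines). -/
def OCD.Closed {Λ : Set Weight} (x : OCD Λ) : Prop := x.a.rays = ∅ ∧ x.b.rays = ∅

/-- The degree of an oriented circle diagram: its number of clockwise cups and caps. -/
noncomputable def OCD.deg {Λ : Set Weight} (x : OCD Λ) : ℕ :=
  cupDeg x.a x.wt + capDeg x.wt x.b

/-- The anti-automorphism `(a λ b) ↦ (b* λ a*)` on the level of basis vectors. -/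
def OCD.flip {Λ : Set Weight} (x : OCD Λ) : OCD Λ where
  a := x.b
  wt := x.wt
  b := x.a
  wt_mem := x.wt_mem
  oriented_a := x.oriented_b
  oriented_b := x.oriented_a

/-- The bilinear extension to the whole diagram algebra of a multiplication given by
structure constants on basis vectors. -/
noncomputable def extendMul {B : Type} {F : Type} [Field F]
    (m : B → B → (B →₀ F)) (s t : B →₀ F) : B →₀ F :=
  s.sum fun x c => t.sum fun y d => (c * d) • m x y

/-- The properties of the diagrammatically defined multiplication which come directly
from its construction: the product `(a λ b)(c μ d)` of two basis vectors is zero unless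
`b* = c`, the multiplication is associative, and it is compatible with the grading. -/
def IsDiagramMul {F : Type} [Field F] (Λ : Set Weight)
    (m : OCD Λ → OCD Λ → (OCD Λ →₀ F)) : Prop :=
  (∀ x y : OCD Λ, x.b.star ≠ y.a → m x y = 0) ∧
  (∀ x y z : OCD Λ,
    extendMul m (m x y) (Finsupp.single z 1) = extendMul m (Finsupp.single x 1) (m y z)) ∧
  (∀ x y z : OCD Λ, (m x y) z ≠ 0 → z.deg = x.deg + y.deg)

/-- Triangularity of the product `(a λ b)(c μ d)` of two basis vectors, with scalars
`s a λ b μ ∈ {0,1}` depending only on `a λ b` and `μ` but not on `d`: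
`(a λ b)(c μ d) = 0` if `b ≠ c*`; it equals `s(aλb)(μ)·(a μ d) + (†)` if `b = c*` and
`a μ` is oriented; and it equals `(†)` otherwise, where `(†)` is a linear combination of
basis vectors `(a ν d)` with `ν > μ`; moreover `s(aλb)(μ) = 1` if `b = λ̄ = c*` and
`a μ` is oriented. -/
def TriangularAt {F : Type} [Field F] {Λ : Set Weight}
    (m : OCD Λ → OCD Λ → (OCD Λ →₀ F))
    (s : ArcDiagram → Weight → ArcDiagram → Weight → F)
    (x y : OCD Λ) : Prop :=
  (x.b.star ≠ y.a → m x y = 0) ∧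
  (x.b.star = y.a → OrientedCup x.a y.wt →
    (∀ z : OCD Λ, (m x y) z ≠ 0 →
      z.a = x.a ∧ z.b = y.b ∧ (z.wt = y.wt ∨ BruhatLT y.wt z.wt)) ∧
    (∀ z : OCD Λ, z.a = x.a → z.b = y.b → z.wt = y.wt →
      (m x y) z = s x.a x.wt x.b y.wt)) ∧
  (x.b.star = y.a → ¬ OrientedCup x.a y.wt →
    ∀ z : OCD Λ, (m x y) z ≠ 0 → z.a = x.a ∧ z.b = y.b ∧ BruhatLT y.wt z.wt) ∧
  (x.b.star = y.a → IsOverline x.wt x.b → OrientedCup x.a y.wt →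
    s x.a x.wt x.b y.wt = 1)

/-- `w` is the closure `cl(v)` of the bounded weight `v`: `p` new vertices labelled `∨`
are added at the left end of the number line and `q` new vertices labelled `∧` at the
right end. -/
def IsClosureOf (p q : ℕ) (v w : Weight) : Prop :=
  v.support.Finite ∧
  (∀ i ∈ v.support, w.label i = v.label i) ∧
  ∃ L R : Set ℤ,
    w.support = L ∪ v.support ∪ R ∧
    L.Finite ∧ R.Finite ∧ L.ncard = p ∧ R.ncard = q ∧
    (∀ a ∈ L, (∀ i ∈ v.support, a < i) ∧ ∀ r ∈ R, a < r) ∧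
    (∀ r ∈ R, ∀ i ∈ v.support, i < r) ∧
    (∀ a ∈ L, w.label a = some Label.down) ∧
    (∀ r ∈ R, w.label r = some Label.up)

/-- `v ≺ w` for weights: `v` is bounded, its vertices form a subset of the vertices of
`w`, the labels agree on the vertices of `v`, and amongst the remaining vertices of `w`
no two are labelled `∨ ∧` in that order from left to right. -/
def WPrec (v w : Weight) : Prop :=
  v.support.Finite ∧ v.support ⊆ w.support ∧
  (∀ i ∈ v.support, w.label i = v.label i) ∧
  ∀ i j : ℤ, i < j → i ∈ w.support → j ∈ w.support → i ∉ v.support → j ∉ v.support →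
    ¬(w.label i = some Label.down ∧ w.label j = some Label.up)

/-- `Γ ≺ Λ` for blocks. -/
def BPrec (Γ Λ : Set Weight) : Prop := ∃ v ∈ Γ, ∃ w ∈ Λ, WPrec v w

/-! ### Auxiliary lemmas -/

section Aux

variable {w : Weight} {b b' : ArcDiagram}

lemma sim_symm {v w : Weight} (h : Sim v w) : Sim w v := by
  obtain ⟨h1, h2, h3, ⟨e4⟩, ⟨e5⟩⟩ := h
  exact ⟨fun i => (h1 i).symm, fun i => (h2 i).symm, fun i => (h3 i).symm,
    ⟨e4.symm⟩, ⟨e5.symm⟩⟩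

lemma sim_trans {u v w : Weight} (h : Sim u v) (h' : Sim v w) : Sim u w := by
  obtain ⟨h1, h2, h3, ⟨e4⟩, ⟨e5⟩⟩ := h
  obtain ⟨h1', h2', h3', ⟨e4'⟩, ⟨e5'⟩⟩ := h'
  exact ⟨fun i => (h1 i).trans (h1' i), fun i => (h2 i).trans (h2' i),
    fun i => (h3 i).trans (h3' i), ⟨e4.trans e4'⟩, ⟨e5.trans e5'⟩⟩

lemma sim_of_block {Λ : Set Weight} (hΛ : IsBlock Λ) {l v : Weight}
    (hl : l ∈ Λ) (hv : v ∈ Λ) : Sim l v := by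
  obtain ⟨w0, rfl⟩ := hΛ
  exact sim_trans (sim_symm hl) hv

lemma arc_ext (h1 : b.support = b'.support) (h2 : b.cups = b'.cups)
    (h3 : b.rays = b'.rays) : b = b' := by
  cases b; cases b'
  simp only at h1 h2 h3
  subst h1; subst h2; subst h3
  rfl

lemma ocd_ext {Λ : Set Weight} {x y : OCD Λ} (h1 : x.a = y.a) (h2 : x.wt = y.wt)
    (h3 : x.b = y.b) : x = y := by
  cases x; cases y
  simp only at h1 h2 h3
  subst h1; subst h2; subst h3
  rfl

lemma cup_left (hb : IsUnderline w b) {p : ℤ × ℤ} (hp : p ∈ b.cups) :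
    w.label p.1 = some Label.down := hb.2 p hp

lemma cup_right (hb : IsUnderline w b) {p : ℤ × ℤ} (hp : p ∈ b.cups) :
    w.label p.2 = some Label.up := by
  rcases hb.1.2.2.1 p hp with h | h
  · exact h.2
  · exact absurd ((hb.2 p hp).symm.trans h.1) (by decide)

lemma vertex_cases (b : ArcDiagram) {t : ℤ} (ht : t ∈ b.support) :
    b.Free t ∨ t ∈ b.rays ∨ ∃ p ∈ b.cups, t = p.1 ∨ t = p.2 := by
  by_cases hr : t ∈ b.rays
  · exact Or.inr (Or.inl hr)
  by_cases hc : ∃ p ∈ b.cups, t = p.1 ∨ t = p.2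
  · exact Or.inr (Or.inr hc)
  · push_neg at hc
    exact Or.inl ⟨ht, hr, fun p hp => hc p hp⟩

lemma mem_support_inside (hb : IsUnderline w b) {i j t : ℤ} (hij : (i, j) ∈ b.cups)
    (h1 : i ≤ t) (h2 : t ≤ j) : t ∈ b.support := by
  have hsub := b.cups_subset _ hij
  exact b.consecutive i t j h1 h2 hsub.1 hsub.2

lemma up_partner (hb : IsUnderline w b) {i j t : ℤ} (hij : (i, j) ∈ b.cups)
    (h1 : i ≤ t) (h2 : t ≤ j) (ht : w.label t = some Label.up) :
    ∃ p, (p, t) ∈ b.cups := by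
  by_cases htj : t = j
  · exact ⟨i, htj ▸ hij⟩
  have hti : i < t := by
    rcases lt_or_eq_of_le h1 with h | h
    · exact h
    · exfalso
      have hli := cup_left hb hij
      rw [← h] at ht
      exact absurd (hli.symm.trans ht) (by decide)
  have htj' : t < j := lt_of_le_of_ne h2 htj
  rcases vertex_cases b (mem_support_inside hb hij h1 h2) with hf | hr | ⟨⟨p1, p2⟩, hp, hpe⟩
  · rcases hb.1.2.1 t hf with h | h <;> simp [h] at ht
  · exact absurd ⟨hti, htj'⟩ (b.rays_cups_noncrossing _ hij t hr)
  · simp only at hpe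
    rcases hpe with he | he
    · exfalso
      have := cup_left hb hp
      simp only at this
      rw [← he] at this
      exact absurd (this.symm.trans ht) (by decide)
    · exact ⟨p1, he ▸ hp⟩

lemma down_partner (hb : IsUnderline w b) {i j t : ℤ} (hij : (i, j) ∈ b.cups)
    (h1 : i ≤ t) (h2 : t ≤ j) (ht : w.label t = some Label.down) :
    ∃ q, (t, q) ∈ b.cups := by
  by_cases hti : t = i
  · exact ⟨j, hti ▸ hij⟩
  have hti' : i < t := lt_of_le_of_ne h1 (Ne.symm hti)
  have htj : t < j := by
    rcases lt_or_eq_of_le h2 with h | h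
    · exact h
    · exfalso
      have hlj := cup_right hb hij
      rw [h] at ht
      exact absurd (ht.symm.trans hlj) (by decide)
  rcases vertex_cases b (mem_support_inside hb hij h1 h2) with hf | hr | ⟨⟨p1, p2⟩, hp, hpe⟩
  · rcases hb.1.2.1 t hf with h | h <;> simp [h] at ht
  · exact absurd ⟨hti', htj⟩ (b.rays_cups_noncrossing _ hij t hr)
  · simp only at hpe
    rcases hpe with he | he
    · exact ⟨p2, he ▸ hp⟩
    · exfalso
      have := cup_right hb hp
      simp only at this
      rw [← he] at this
      exact absurd (ht.symm.trans this) (by decide)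

lemma left_end_bound (hb : IsUnderline w b) {i j p t : ℤ} (hij : (i, j) ∈ b.cups)
    (hpt : (p, t) ∈ b.cups) (h1 : i ≤ t) (h2 : t ≤ j) :
    i ≤ p ∧ (t < j → i < p) ∧ (t = j → p = i) := by
  have hti : i < t := by
    rcases lt_or_eq_of_le h1 with h | h
    · exact h
    · exfalso
      have hu := cup_right hb hpt
      have hd := cup_left hb hij
      simp only at hu hd
      rw [← h] at hu
      exact absurd (hd.symm.trans hu) (by decide)
  by_cases htj : t = j
  · subst htj
    have hpe : (p, t) = (i, t) := by
      by_contra hne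
      exact (b.cups_disjoint _ hpt _ hij hne).2.2.2 rfl
    have hp : p = i := congrArg Prod.fst hpe
    exact ⟨hp.symm.le, fun h => absurd h (lt_irrefl t), fun _ => hp⟩
  · have htj' : t < j := lt_of_le_of_ne h2 htj
    have hpi : p ≠ i := by
      intro h
      subst h
      have hne : ((p : ℤ), t) ≠ ((p : ℤ), j) := by simp [htj]
      exact (b.cups_disjoint _ hpt _ hij hne).1 rfl
    have hnlt : ¬ p < i := by
      intro h
      have := b.cups_noncrossing _ hpt _ hij h hti
      simp only at this
      omega
    have hip : i < p := by omega
    exact ⟨hip.le, fun _ => hip, fun h => absurd h htj⟩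

lemma right_end_bound (hb : IsUnderline w b) {i j q t : ℤ} (hij : (i, j) ∈ b.cups)
    (htq : (t, q) ∈ b.cups) (h1 : i ≤ t) (h2 : t ≤ j) :
    q ≤ j ∧ (i < t → q < j) ∧ (t = i → q = j) := by
  have htj : t < j := by
    rcases lt_or_eq_of_le h2 with h | h
    · exact h
    · exfalso
      have hd := cup_left hb htq
      have hu := cup_right hb hij
      simp only at hu hd
      rw [h] at hd
      exact absurd (hd.symm.trans hu) (by decide)
  by_cases hti : t = i
  · subst hti
    have hpe : ((t : ℤ), q) = (t, j) := by
      by_contra hne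
      exact (b.cups_disjoint _ htq _ hij hne).1 rfl
    have hq : q = j := congrArg Prod.snd hpe
    exact ⟨hq.le, fun h => absurd h (lt_irrefl t), fun _ => hq⟩
  · have hti' : i < t := lt_of_le_of_ne h1 (Ne.symm hti)
    have hqj : q < j := by
      have := b.cups_noncrossing _ hij _ htq hti' htj
      simpa using this
    exact ⟨hqj.le, fun _ => hqj, fun h => absurd h hti⟩

/-- Counting labels on an interval. -/
noncomputable def cnt (w : Weight) (lab : Label) (i k : ℤ) : ℕ :=
  ((Finset.Icc i k).filter (fun t => w.label t = some lab)).card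

/-- The matching condition characterizing the cups of an underline (lowest-weight)
cup diagram. -/
def MatchP (w : Weight) (i j : ℤ) : Prop :=
  i < j ∧ w.label i = some Label.down ∧ w.label j = some Label.up ∧
  (∀ k, i ≤ k → k < j → cnt w Label.up i k < cnt w Label.down i k) ∧
  cnt w Label.up i j = cnt w Label.down i j

lemma cups_matchP (hb : IsUnderline w b) {i j : ℤ} (hij : (i, j) ∈ b.cups) :
    MatchP w i j := by
  have hlt : i < j := b.cups_lt _ hij
  have hli : w.label i = some Label.down := cup_left hb hij
  have hlj : w.label j = some Label.up := cup_right hb hij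
  classical
  set f : ℤ → ℤ := fun t => if h : ∃ p, (p, t) ∈ b.cups then h.choose else 0 with hf
  have hfspec : ∀ t, (∃ p, (p, t) ∈ b.cups) → (f t, t) ∈ b.cups := by
    intro t h
    rw [hf]
    simp only [dif_pos h]
    exact h.choose_spec
  set g : ℤ → ℤ := fun t => if h : ∃ q, (t, q) ∈ b.cups then h.choose else 0 with hg
  have hgspec : ∀ t, (∃ q, (t, q) ∈ b.cups) → (t, g t) ∈ b.cups := by
    intro t h
    rw [hg]
    simp only [dif_pos h]
    exact h.choose_spec
  have hfinj : ∀ t t', (f t, t) ∈ b.cups → (f t', t') ∈ b.cups → f t = f t' → t = t' := by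
    intro t t' h h' he
    by_contra hne
    have hne' : ((f t : ℤ), t) ≠ (f t', t') := by
      intro hc
      exact hne (congrArg Prod.snd hc)
    exact (b.cups_disjoint _ h _ h' hne').1 he
  have hginj : ∀ t t', (t, g t) ∈ b.cups → (t', g t') ∈ b.cups → g t = g t' → t = t' := by
    intro t t' h h' he
    by_contra hne
    have hne' : ((t : ℤ), g t) ≠ (t', g t') := by
      intro hc
      exact hne (congrArg Prod.fst hc)
    exact (b.cups_disjoint _ h _ h' hne').2.2.2 he
  refine ⟨hlt, hli, hlj, ?_, ?_⟩
  · intro k hik hkj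
    unfold cnt
    set U := (Finset.Icc i k).filter (fun t => w.label t = some Label.up) with hU
    set D := (Finset.Icc i k).filter (fun t => w.label t = some Label.down) with hD
    have hiD : i ∈ D := by
      simp [hD, Finset.mem_Icc, hik, hli]
    have hmem : ∀ t ∈ U, f t ∈ D.erase i := by
      intro t htU
      simp only [hU, Finset.mem_filter, Finset.mem_Icc] at htU
      obtain ⟨⟨hit, htk⟩, hlt'⟩ := htU
      have htj : t ≤ j := le_of_lt (lt_of_le_of_lt htk hkj)
      have hex : ∃ p, (p, t) ∈ b.cups := up_partner hb hij hit htj hlt'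
      have hspec := hfspec t hex
      have hbd := left_end_bound hb hij hspec hit htj
      have hip : i < f t := hbd.2.1 (lt_of_le_of_lt htk hkj)
      have hpt : f t < t := b.cups_lt _ hspec
      refine Finset.mem_erase.mpr ⟨by omega, ?_⟩
      simp only [hD, Finset.mem_filter, Finset.mem_Icc]
      exact ⟨⟨by omega, by omega⟩, cup_left hb hspec⟩
    have hcard : U.card ≤ (D.erase i).card := by
      apply Finset.card_le_card_of_injOn f hmem
      intro t ht t' ht' he
      simp only [hU, Finset.coe_filter, Set.mem_setOf_eq, Finset.mem_coe,
        Finset.mem_filter, Finset.mem_Icc] at ht ht'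
      have hex : ∃ p, (p, t) ∈ b.cups :=
        up_partner hb hij ht.1.1 (by omega) ht.2
      have hex' : ∃ p, (p, t') ∈ b.cups :=
        up_partner hb hij ht'.1.1 (by omega) ht'.2
      exact hfinj t t' (hfspec t hex) (hfspec t' hex') he
    calc U.card ≤ (D.erase i).card := hcard
      _ < D.card := Finset.card_erase_lt_of_mem hiD
  · unfold cnt
    set U := (Finset.Icc i j).filter (fun t => w.label t = some Label.up) with hU
    set D := (Finset.Icc i j).filter (fun t => w.label t = some Label.down) with hD
    apply le_antisymm
    · apply Finset.card_le_card_of_injOn f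
      · intro t htU
        rw [hU, Finset.mem_coe, Finset.mem_filter, Finset.mem_Icc] at htU
        obtain ⟨⟨hit, htj⟩, hlt'⟩ := htU
        have hex : ∃ p, (p, t) ∈ b.cups := up_partner hb hij hit htj hlt'
        have hspec := hfspec t hex
        have hbd := left_end_bound hb hij hspec hit htj
        have hpt : f t < t := b.cups_lt _ hspec
        rw [hD, Finset.mem_coe, Finset.mem_filter, Finset.mem_Icc]
        exact ⟨⟨hbd.1, by omega⟩, cup_left hb hspec⟩
      · intro t ht t' ht' he
        simp only [hU, Finset.coe_filter, Set.mem_setOf_eq, Finset.mem_coe,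
          Finset.mem_filter, Finset.mem_Icc] at ht ht'
        have hex : ∃ p, (p, t) ∈ b.cups := up_partner hb hij ht.1.1 ht.1.2 ht.2
        have hex' : ∃ p, (p, t') ∈ b.cups := up_partner hb hij ht'.1.1 ht'.1.2 ht'.2
        exact hfinj t t' (hfspec t hex) (hfspec t' hex') he
    · apply Finset.card_le_card_of_injOn g
      · intro t htD
        rw [hD, Finset.mem_coe, Finset.mem_filter, Finset.mem_Icc] at htD
        obtain ⟨⟨hit, htj⟩, hlt'⟩ := htD
        have hex : ∃ q, (t, q) ∈ b.cups := down_partner hb hij hit htj hlt'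
        have hspec := hgspec t hex
        have hbd := right_end_bound hb hij hspec hit htj
        have htq : t < g t := b.cups_lt _ hspec
        rw [hU, Finset.mem_coe, Finset.mem_filter, Finset.mem_Icc]
        exact ⟨⟨by omega, hbd.1⟩, cup_right hb hspec⟩
      · intro t ht t' ht' he
        simp only [hD, Finset.coe_filter, Set.mem_setOf_eq, Finset.mem_coe,
          Finset.mem_filter, Finset.mem_Icc] at ht ht'
        have hex : ∃ q, (t, q) ∈ b.cups := down_partner hb hij ht.1.1 ht.1.2 ht.2
        have hex' : ∃ q, (t', q) ∈ b.cups := down_partner hb hij ht'.1.1 ht'.1.2 ht'.2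
        exact hginj t t' (hgspec t hex) (hgspec t' hex') he

lemma cnt_split {w : Weight} {lab : Label} {i i' j : ℤ} (h1 : i < i') (h2 : i' ≤ j) :
    cnt w lab i j = cnt w lab i (i' - 1) + cnt w lab i' j := by
  classical
  unfold cnt
  have hun : Finset.Icc i j = Finset.Icc i (i' - 1) ∪ Finset.Icc i' j := by
    ext t
    simp only [Finset.mem_Icc, Finset.mem_union]
    omega
  rw [hun, Finset.filter_union, Finset.card_union_of_disjoint]
  rw [Finset.disjoint_left]
  intro a ha hb
  simp only [Finset.mem_filter, Finset.mem_Icc] at ha hb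
  omega

lemma matchP_right_unique {w : Weight} {i j j' : ℤ} (h : MatchP w i j)
    (h' : MatchP w i j') : j = j' := by
  by_contra hne
  have he := h.2.2.2.2
  have he' := h'.2.2.2.2
  rcases lt_or_gt_of_ne hne with hlt | hlt
  · have := h'.2.2.2.1 j (le_of_lt h.1) hlt
    omega
  · have := h.2.2.2.1 j' (le_of_lt h'.1) hlt
    omega

lemma matchP_left_unique {w : Weight} {i i' j : ℤ} (h : MatchP w i j)
    (h' : MatchP w i' j) : i = i' := by
  by_contra hne
  wlog hlt : i < i' generalizing i i'
  · exact this h' h (Ne.symm hne) (by omega)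
  have e1 := h.2.2.2.2
  have e2 := h'.2.2.2.2
  have s1 := cnt_split (w := w) (lab := Label.up) hlt (le_of_lt h'.1)
  have s2 := cnt_split (w := w) (lab := Label.down) hlt (le_of_lt h'.1)
  have st := h.2.2.2.1 (i' - 1) (by omega) (by have := h'.1; omega)
  omega

lemma underline_cups_subset (hb : IsUnderline w b) (hb' : IsUnderline w b') :
    b.cups ⊆ b'.cups := by
  rintro ⟨i, j⟩ hij
  have hP : MatchP w i j := cups_matchP hb hij
  have hiw : i ∈ w.support := by simp [Weight.support, hP.2.1]
  have hjw : j ∈ w.support := by simp [Weight.support, hP.2.2.1]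
  have his : i ∈ b'.support := by rw [hb'.1.1]; exact hiw
  have hjs : j ∈ b'.support := by rw [hb'.1.1]; exact hjw
  rcases vertex_cases b' his with hf | hr | ⟨⟨p1, p2⟩, hp, hpe⟩
  · rcases hb'.1.2.1 i hf with h | h <;>
      exact absurd (h.symm.trans hP.2.1) (by decide)
  · exfalso
    rcases vertex_cases b' hjs with hf' | hr' | ⟨⟨q1, q2⟩, hq, hqe⟩
    · rcases hb'.1.2.1 j hf' with h | h <;>
        exact absurd (h.symm.trans hP.2.2.1) (by decide)
    · exact hb'.1.2.2.2.2 i hr j hr' hP.1 ⟨hP.2.1, hP.2.2.1⟩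
    · simp only at hqe
      rcases hqe with he | he
      · have := cup_left hb' hq
        simp only at this
        rw [← he] at this
        exact absurd (this.symm.trans hP.2.2.1) (by decide)
      · subst he
        have hPq : MatchP w q1 j := cups_matchP hb' hq
        have hq1 : q1 = i := matchP_left_unique hPq hP
        exact (b'.rays_cups_disjoint _ hq i hr).1 hq1.symm
  · simp only at hpe
    rcases hpe with he | he
    · subst he
      have hPp : MatchP w i p2 := cups_matchP hb' hp
      have : p2 = j := matchP_right_unique hPp hP
      exact this ▸ hp
    · exfalso
      have := cup_right hb' hp
      simp only at this
      rw [← he] at this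
      exact absurd (this.symm.trans hP.2.1) (by decide)

lemma underline_rays_subset (hb : IsUnderline w b) (hb' : IsUnderline w b')
    (hc : b.cups = b'.cups) : b.rays ⊆ b'.rays := by
  intro r hr
  have hlab := hb.1.2.2.2.1 r hr
  have hrs : r ∈ b'.support := by
    rw [hb'.1.1, ← hb.1.1]
    exact b.rays_subset hr
  rcases vertex_cases b' hrs with hf | hr' | ⟨p, hp, hpe⟩
  · exfalso
    rcases hb'.1.2.1 r hf with h | h <;> rcases hlab with h' | h' <;>
      exact absurd (h.symm.trans h') (by decide)
  · exact hr'
  · exfalso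
    rw [← hc] at hp
    have hd := b.rays_cups_disjoint p hp r hr
    rcases hpe with he | he
    · exact hd.1 he
    · exact hd.2 he

lemma underline_unique (hb : IsUnderline w b) (hb' : IsUnderline w b') : b = b' := by
  have hc : b.cups = b'.cups :=
    Set.Subset.antisymm (underline_cups_subset hb hb') (underline_cups_subset hb' hb)
  have hr : b.rays = b'.rays :=
    Set.Subset.antisymm (underline_rays_subset hb hb' hc) (underline_rays_subset hb' hb hc.symm)
  exact arc_ext (hb.1.1.trans hb'.1.1.symm) hc hr

lemma extendMul_single_single {B F : Type} [Field F] (m : B → B → (B →₀ F)) (x y : B) :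
    extendMul m (Finsupp.single x 1) (Finsupp.single y 1) = m x y := by
  unfold extendMul
  rw [Finsupp.sum_single_index, Finsupp.sum_single_index]
  · simp
  · simp
  · rw [Finsupp.sum_single_index] <;> simp

lemma extendMul_zero {B F : Type} [Field F] (m : B → B → (B →₀ F)) (s : B →₀ F) :
    extendMul m s 0 = 0 := by
  unfold extendMul
  simp

lemma extendMul_add {B F : Type} [Field F] (m : B → B → (B →₀ F)) (s t t' : B →₀ F) :
    extendMul m s (t + t') = extendMul m s t + extendMul m s t' := by
  unfold extendMul
  rw [← Finsupp.sum_add]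
  refine Finsupp.sum_congr fun x _ => ?_
  rw [Finsupp.sum_add_index']
  · intro y
    simp
  · intro y d d'
    rw [mul_add, add_smul]

lemma extendMul_smul {B F : Type} [Field F] (m : B → B → (B →₀ F)) (c : F)
    (s t : B →₀ F) : extendMul m s (c • t) = c • extendMul m s t := by
  unfold extendMul
  rw [Finsupp.smul_sum]
  refine Finsupp.sum_congr fun x hx => ?_
  rw [Finsupp.sum_smul_index, Finsupp.smul_sum]
  · refine Finsupp.sum_congr fun y hy => ?_
    rw [smul_smul]
    ring_nf
  · intro y
    simp

lemma mem_span_singles {F : Type} [Field F] {Λ : Set Weight} (Q : OCD Λ → Prop)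
    (d : OCD Λ →₀ F) (h : ∀ z ∈ d.support, Q z) :
    d ∈ Submodule.span F {v : OCD Λ →₀ F | ∃ x : OCD Λ, v = Finsupp.single x 1 ∧ Q x} := by
  have hd : d = d.sum fun z c => c • Finsupp.single z 1 := by
    conv_lhs => rw [← Finsupp.sum_single d]
    exact Finsupp.sum_congr fun z _ => by rw [Finsupp.smul_single, smul_eq_mul, mul_one]
  rw [hd]
  exact Submodule.sum_mem _ fun z hz =>
    Submodule.smul_mem _ _ (Submodule.subset_span ⟨z, rfl, h z hz⟩)

end Aux

/-- Let `Λ` be a block and `λ ∈ Λ`. Enumerating the `2^{def(λ)}` weights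
`μ ⊃ λ` as `μ_1, …, μ_n = λ` so that `μ_i > μ_j` implies `i < j`, and letting `M(i)` be
the subspace of `P(λ) = K_Λ e_λ` spanned by the basis vectors `(c μ_k λ̄)` with `k ≤ i`,
the chain `{0} = M(0) ⊂ M(1) ⊂ ⋯ ⊂ M(n) = P(λ)` is a filtration of `P(λ)` by
`K_Λ`-submodules with `M(i)/M(i-1) ≅ V(μ_i)⟨deg(μ_i λ̄)⟩` as graded `K_Λ`-modules.
(Here `K_Λ` is given by any multiplication satisfying the defining and triangularity
properties of the diagram algebra, with structure constants `s`; the section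
`M(i)/M(i-1)` is described explicitly via its diagram basis `(c μ_i λ̄) + M(i-1)` and the
cell module action `(aλb)(cμ_i| = s_{aλb}(μ_i)(aμ_i|`.) -/
theorem statement_16 (F : Type) [Field F] (Λ : Set Weight) (hΛ : IsBlock Λ)
    (l : Weight) (hl : l ∈ Λ)
    (m : OCD Λ → OCD Λ → (OCD Λ →₀ F)) (hm : IsDiagramMul Λ m)
    (s : ArcDiagram → Weight → ArcDiagram → Weight → F)
    (hs01 : ∀ (a : ArcDiagram) (v : Weight) (b : ArcDiagram) (u : Weight),
      s a v b u = 0 ∨ s a v b u = 1)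
    (htri : ∀ x y : OCD Λ, TriangularAt m s x y)
    (n : ℕ) (hn : ∀ c : ArcDiagram, IsUnderline l c → n = 2 ^ c.cups.ncard)
    (μ : Fin n → Weight)
    (hinj : Function.Injective μ)
    (hrange : ∀ w : Weight, SubW l w ↔ ∃ i : Fin n, μ i = w)
    (hlast : ∀ i : Fin n, (i : ℕ) = n - 1 → μ i = l)
    (horder : ∀ i j : Fin n, BruhatLT (μ j) (μ i) → (i : ℕ) < (j : ℕ)) :
    let Mi : ℕ → Submodule F (OCD Λ →₀ F) := fun k =>
      Submodule.span F {v : OCD Λ →₀ F | ∃ x : OCD Λ,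
        v = Finsupp.single x 1 ∧ IsUnderline l x.b ∧ ∃ i : Fin n, (i : ℕ) < k ∧ x.wt = μ i}
    -- each M(i) is a K_Λ-submodule of P(λ)
    (∀ k : ℕ, ∀ x : OCD Λ, ∀ v ∈ Mi k, extendMul m (Finsupp.single x 1) v ∈ Mi k) ∧
    -- the filtration runs from 0 to P(λ), with strict inclusions
    Mi 0 = ⊥ ∧
    Mi n = Submodule.span F {v : OCD Λ →₀ F | ∃ x : OCD Λ,
      v = Finsupp.single x 1 ∧ IsUnderline l x.b} ∧
    (∀ k : ℕ, k < n → Mi k < Mi (k + 1)) ∧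
    -- the sections: M(i)/M(i-1) ≅ V(μ_i)⟨deg(μ_i λ̄)⟩
    (∀ i : Fin n,
      -- the images of the basis vectors (c μ_i λ̄) correspond bijectively to the basis
      -- (c μ_i| of the cell module V(μ_i)
      (∀ c : ArcDiagram, OrientedCup c (μ i) →
        ∃! x : OCD Λ, x.wt = μ i ∧ IsUnderline l x.b ∧ x.a = c) ∧
      -- the grading is shifted by the constant deg(μ_i λ̄)
      (∀ x x' : OCD Λ, x.wt = μ i → IsUnderline l x.b → x'.wt = μ i →
        IsUnderline l x'.b →
        capDeg x.wt x.b = capDeg x'.wt x'.b ∧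
        x.deg = cupDeg x.a x.wt + capDeg x.wt x.b) ∧
      -- the K_Λ-action on the section agrees with the cell module action
      (∀ x y : OCD Λ, y.wt = μ i → IsUnderline l y.b →
        ((x.b.star = y.a ∧ OrientedCup x.a (μ i)) →
          ∀ z : OCD Λ, z.a = x.a → z.wt = μ i → z.b = y.b →
            m x y - s x.a x.wt x.b (μ i) • Finsupp.single z 1 ∈ Mi (i : ℕ)) ∧
        (¬(x.b.star = y.a ∧ OrientedCup x.a (μ i)) →
          m x y ∈ Mi (i : ℕ)))) := by
  intro Mi
  -- membership criterion for Mi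
  have hQspan : ∀ (k : ℕ) (d : OCD Λ →₀ F),
      (∀ z ∈ d.support, IsUnderline l z.b ∧ ∃ i : Fin n, (i : ℕ) < k ∧ z.wt = μ i) →
      d ∈ Mi k := by
    intro k d h
    exact mem_span_singles
      (fun x => IsUnderline l x.b ∧ ∃ i : Fin n, (i : ℕ) < k ∧ x.wt = μ i) d h
  -- every OCD whose cap part is an underline of l has weight in the range of μ
  have hsub : ∀ z : OCD Λ, IsUnderline l z.b → ∃ i : Fin n, μ i = z.wt := by
    intro z hz
    have hsim : Sim l z.wt := sim_of_block hΛ hl z.wt_mem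
    exact (hrange z.wt).1 ⟨hsim, z.b, hz, z.oriented_b⟩
  -- products of basis vectors stay in the filtration
  have hmul_mem : ∀ (k : ℕ) (x y : OCD Λ), IsUnderline l y.b →
      (∃ i : Fin n, (i : ℕ) < k ∧ y.wt = μ i) → m x y ∈ Mi k := by
    intro k x y hyu ⟨i, hik, hyi⟩
    by_cases hba : x.b.star = y.a
    · have hgen : ∀ z : OCD Λ, z.a = x.a → z.b = y.b → (z.wt = y.wt ∨ BruhatLT y.wt z.wt) →
          IsUnderline l z.b ∧ ∃ i' : Fin n, (i' : ℕ) < k ∧ z.wt = μ i' := by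
        intro z _ hbz hwt
        have hzu : IsUnderline l z.b := hbz ▸ hyu
        refine ⟨hzu, ?_⟩
        rcases hwt with h | h
        · exact ⟨i, hik, h.trans hyi⟩
        · obtain ⟨j, hj⟩ := hsub z hzu
          rw [hyi, ← hj] at h
          have hji : (j : ℕ) < (i : ℕ) := horder j i h
          exact ⟨j, lt_trans hji hik, hj.symm⟩
      by_cases hor : OrientedCup x.a y.wt
      · apply hQspan
        intro z hz
        obtain ⟨ha, hbz, hwt⟩ := ((htri x y).2.1 hba hor).1 z (Finsupp.mem_support_iff.mp hz)
        exact hgen z ha hbz hwt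
      · apply hQspan
        intro z hz
        obtain ⟨ha, hbz, hwt⟩ := (htri x y).2.2.1 hba hor z (Finsupp.mem_support_iff.mp hz)
        exact hgen z ha hbz (Or.inr hwt)
    · rw [(htri x y).1 hba]
      exact Submodule.zero_mem _
  refine ⟨?_, ?_, ?_, ?_, ?_⟩
  · -- each M(i) is a K_Λ-submodule
    intro k x v hv
    induction hv using Submodule.span_induction with
    | mem v hvmem =>
      obtain ⟨y, rfl, hyu, hy⟩ := hvmem
      rw [extendMul_single_single]
      exact hmul_mem k x y hyu hy
    | zero =>
      rw [extendMul_zero]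
      exact Submodule.zero_mem _
    | add v v' _ _ hv hv' =>
      rw [extendMul_add]
      exact Submodule.add_mem _ hv hv'
    | smul c v _ hv =>
      rw [extendMul_smul]
      exact Submodule.smul_mem _ _ hv
  · -- M(0) = 0
    rw [Submodule.span_eq_bot]
    rintro v ⟨x, rfl, _, i, hi, _⟩
    exact absurd hi (Nat.not_lt_zero _)
  · -- M(n) = P(λ)
    show Submodule.span F _ = Submodule.span F _
    congr 1
    ext v
    constructor
    · rintro ⟨x, rfl, hu, _⟩
      exact ⟨x, rfl, hu⟩
    · rintro ⟨x, rfl, hu⟩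
      obtain ⟨i, hi⟩ := hsub x hu
      exact ⟨x, rfl, hu, i, i.isLt, hi.symm⟩
  · -- strict inclusions
    intro k hk
    obtain ⟨hsim, c0, hc0u, hc0o⟩ := (hrange (μ ⟨k, hk⟩)).2 ⟨⟨k, hk⟩, rfl⟩
    have hmemΛ : μ ⟨k, hk⟩ ∈ Λ := by
      obtain ⟨w0, rfl⟩ := hΛ
      exact sim_trans hl hsim
    set x0 : OCD Λ := ⟨c0, μ ⟨k, hk⟩, c0, hmemΛ, hc0o, hc0o⟩ with hx0
    rw [SetLike.lt_iff_le_and_exists]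
    refine ⟨Submodule.span_mono ?_, Finsupp.single x0 1,
      Submodule.subset_span ⟨x0, rfl, hc0u, ⟨k, hk⟩, Nat.lt_succ_self k, rfl⟩, ?_⟩
    · rintro v ⟨x, rfl, hu, i, hik, hwt⟩
      exact ⟨x, rfl, hu, i, Nat.lt_succ_of_lt hik, hwt⟩
    · intro hmem'
      have hle : Mi k ≤ Finsupp.supported F F {z : OCD Λ | ∃ i : Fin n, (i : ℕ) < k ∧ z.wt = μ i} := by
        rw [Submodule.span_le]
        rintro v ⟨x, rfl, _, i, hik, hwt⟩
        exact Finsupp.single_mem_supported F 1 ⟨i, hik, hwt⟩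
      have hsupp := hle hmem'
      rw [Finsupp.mem_supported] at hsupp
      have hx0mem : x0 ∈ (Finsupp.single x0 (1 : F)).support := by
        rw [Finsupp.mem_support_iff, Finsupp.single_eq_same]
        exact one_ne_zero
      obtain ⟨i, hik, hwt⟩ := hsupp hx0mem
      have : i = ⟨k, hk⟩ := hinj (hwt.symm : μ i = μ ⟨k, hk⟩)
      rw [this] at hik
      exact absurd hik (lt_irrefl k)
  · -- the sections
    intro i
    refine ⟨?_, ?_, ?_⟩
    · -- bijective correspondence with the cell module basis
      intro c hc
      obtain ⟨hsim, c0, hc0u, hc0o⟩ := (hrange (μ i)).2 ⟨i, rfl⟩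
      have hmemΛ : μ i ∈ Λ := by
        obtain ⟨w0, rfl⟩ := hΛ
        exact sim_trans hl hsim
      refine ⟨⟨c, μ i, c0, hmemΛ, hc, hc0o⟩, ⟨rfl, hc0u, rfl⟩, ?_⟩
      rintro x ⟨hwt, hu, ha⟩
      exact ocd_ext ha hwt (underline_unique hu hc0u)
    · -- grading shift
      intro x x' h1 h2 h3 h4
      have hb : x.b = x'.b := underline_unique h2 h4
      exact ⟨by rw [h1, h3, hb], rfl⟩
    · -- the action on the section
      intro x y hywt hyu
      constructor
      · rintro ⟨hba, hor⟩ z hza hzwt hzb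
        have hor' : OrientedCup x.a y.wt := by rw [hywt]; exact hor
        obtain ⟨hsupp, hval⟩ := (htri x y).2.1 hba hor'
        have hz_eq : (m x y) z = s x.a x.wt x.b y.wt :=
          hval z hza hzb (hzwt.trans hywt.symm)
        apply hQspan
        intro z' hz'
        have hdz' := Finsupp.mem_support_iff.mp hz'
        by_cases hzz : z' = z
        · exfalso
          subst hzz
          rw [Finsupp.sub_apply, Finsupp.smul_apply, Finsupp.single_eq_same,
            smul_eq_mul, mul_one, hz_eq, hywt] at hdz'
          exact hdz' (sub_self _)
        · have hmz' : (m x y) z' ≠ 0 := by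
            rw [Finsupp.sub_apply, Finsupp.smul_apply,
              Finsupp.single_eq_of_ne' (Ne.symm hzz), smul_zero, sub_zero] at hdz'
            exact hdz'
          obtain ⟨ha', hb', hwt'⟩ := hsupp z' hmz'
          have hu' : IsUnderline l z'.b := hb' ▸ hyu
          refine ⟨hu', ?_⟩
          rcases hwt' with h | h
          · exfalso
            exact hzz (ocd_ext (ha'.trans hza.symm) (h.trans (hywt.trans hzwt.symm))
              (hb'.trans hzb.symm))
          · obtain ⟨j, hj⟩ := hsub z' hu'
            rw [hywt, ← hj] at h
            exact ⟨j, horder j i h, hj.symm⟩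
      · intro hneg
        by_cases hba : x.b.star = y.a
        · have hor : ¬ OrientedCup x.a y.wt := by
            rw [hywt]
            exact fun h => hneg ⟨hba, h⟩
          apply hQspan
          intro z hz
          obtain ⟨ha, hb', hlt⟩ :=
            (htri x y).2.2.1 hba hor z (Finsupp.mem_support_iff.mp hz)
          have hu' : IsUnderline l z.b := hb' ▸ hyu
          refine ⟨hu', ?_⟩
          obtain ⟨j, hj⟩ := hsub z hu'
          rw [hywt, ← hj] at hlt
          exact ⟨j, horder j i hlt, hj.symm⟩
        · rw [(htri x y).1 hba]
          exact Submodule.zero_mem _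
end BrundanStroppel
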